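/- arXiv:2302.04484 — 5 statements merged into one kernel-verified Lean document; each statement's English description precedes it below -/
import Mathlib

section
/- Let G be a group. Suppose there is a function c assigning to every group a real number such that c(H₁) = c(H₂) whenever the groups H₁ and H₂ are isomorphic, and suppose there exist real numbers 0 < α ≤ β such that α·[G:H] ≤ c(H) ≤ β·[G:H] for every finite-index subgroup H ≤ G. Then any two isomorphic finite-index subgroups of G have the same index: if H₁, H₂ ≤ G have finite index in G and H₁ ≅ H₂, then [G:H₁] = [G:H₂]. -/
universe u

namespace IndexIsoAux

variable {G : Type u} [Group G] {H₁ H₂ : Subgroup G} (φ : ↥H₁ ≃* ↥H₂)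

/-- The composite `H₁ → H₂ → G`. -/
def f : ↥H₁ →* G := H₂.subtype.comp φ.toMonoidHom

lemma f_inj : Function.Injective (f φ) :=
  H₂.subtype_injective.comp φ.injective

lemma f_range : (f φ).range = H₂ := by
  rw [f, MonoidHom.range_comp, MonoidHom.range_eq_top_of_surjective _ φ.surjective]
  rw [← MonoidHom.range_eq_map]
  exact H₂.range_subtype

/-- Preimage of `K` under `φ`, as a subgroup of `G` contained in `H₁`. -/
def Pre (K : Subgroup G) : Subgroup G := (Subgroup.comap (f φ) K).map H₁.subtype

/-- Image of `K ≤ H₁` under `φ`, as a subgroup of `G` contained in `H₂`. -/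
def Img (K : Subgroup G) : Subgroup G := (K.subgroupOf H₁).map (f φ)

lemma pre_le (K : Subgroup G) : Pre φ K ≤ H₁ := Subgroup.map_subtype_le _

lemma pre_finiteIndex (K : Subgroup G) (hK : K.FiniteIndex) (h₁ : H₁.FiniteIndex) :
    (Pre φ K).FiniteIndex := by
  constructor
  rw [Pre, Subgroup.index_map_subtype, Subgroup.index_comap, f_range]
  have : (K.subgroupOf H₂).FiniteIndex := Subgroup.instFiniteIndex_subgroupOf K H₂
  exact mul_ne_zero this.index_ne_zero h₁.index_ne_zero

lemma img_pre_le (K : Subgroup G) : Img φ (Pre φ K) ≤ K := by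
  rw [Img, Pre, Subgroup.subgroupOf, Subgroup.comap_map_eq_self_of_injective
    H₁.subtype_injective]
  exact Subgroup.map_comap_le _ _

lemma img_mono {K L : Subgroup G} (h : K ≤ L) : Img φ K ≤ Img φ L :=
  Subgroup.map_mono (Subgroup.comap_mono h)

lemma img_iso (K : Subgroup G) (h : K ≤ H₁) : Nonempty (↥K ≃* ↥(Img φ K)) :=
  ⟨(Subgroup.subgroupOfEquivOfLe h).symm.trans
    ((K.subgroupOf H₁).equivMapOfInjective _ (f_inj φ))⟩

lemma img_index (K : Subgroup G) (h : K ≤ H₁) :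
    (Img φ K).index * H₁.index = K.index * H₂.index := by
  have h' := Subgroup.relIndex_mul_index h
  rw [Subgroup.relIndex, Subgroup.subgroupOf] at h'
  rw [Img, Subgroup.index_map_of_injective _ (f_inj φ), f_range, mul_right_comm,
    Subgroup.subgroupOf, h']

/-- The tower of iterated preimages of `H₁`. -/
def T : ℕ → Subgroup G
  | 0 => H₁
  | k + 1 => Pre φ (T k)

lemma T_le (k : ℕ) : T φ k ≤ H₁ := by
  cases k with
  | zero => exact le_rfl
  | succ k => exact pre_le φ _

lemma T_finiteIndex (h₁ : H₁.FiniteIndex) (k : ℕ) : (T φ k).FiniteIndex := by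
  induction k with
  | zero => exact h₁
  | succ k ih => exact pre_finiteIndex φ _ ih h₁

/-- Key induction: a subgroup of `T k` can be transported `k` times by `φ`. -/
lemma key (h₂ : H₂.FiniteIndex) :
    ∀ (k : ℕ) (K : Subgroup G), K ≤ T φ k → K.FiniteIndex →
      ∃ S : Subgroup G, S.FiniteIndex ∧ Nonempty (↥S ≃* ↥K) ∧
        S.index * H₁.index ^ k = K.index * H₂.index ^ k := by
  intro k
  induction k with
  | zero => exact fun K _ hK => ⟨K, hK, ⟨MulEquiv.refl _⟩, by simp⟩
  | succ k ih =>
    intro K hKle hK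
    have hKH₁ : K ≤ H₁ := hKle.trans (T_le φ _)
    have hidx : (Img φ K).index * H₁.index = K.index * H₂.index := img_index φ K hKH₁
    have hfin : (Img φ K).FiniteIndex := by
      constructor
      intro h0
      rw [h0, zero_mul] at hidx
      exact mul_ne_zero hK.index_ne_zero h₂.index_ne_zero hidx.symm
    have hle : Img φ K ≤ T φ k := (img_mono φ hKle).trans (img_pre_le φ _)
    obtain ⟨S, hSfin, ⟨e⟩, hSidx⟩ := ih (Img φ K) hle hfin
    obtain ⟨e'⟩ := img_iso φ K hKH₁
    refine ⟨S, hSfin, ⟨e.trans e'.symm⟩, ?_⟩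
    calc S.index * H₁.index ^ (k + 1)
        = S.index * H₁.index ^ k * H₁.index := by ring
      _ = (Img φ K).index * H₂.index ^ k * H₁.index := by rw [hSidx]
      _ = (Img φ K).index * H₁.index * H₂.index ^ k := by ring
      _ = K.index * H₂.index * H₂.index ^ k := by rw [hidx]
      _ = K.index * H₂.index ^ (k + 1) := by ring

/-- One direction of the main theorem. -/
lemma index_le {G : Type u} [Group G]
    (c : (H : Type u) → [inst : Group H] → ℝ)
    (hinv : ∀ (H₁ H₂ : Type u) [Group H₁] [Group H₂],
      Nonempty (H₁ ≃* H₂) → c H₁ = c H₂)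
    (α β : ℝ) (hα : 0 < α)
    (hbound : ∀ H : Subgroup G, H.FiniteIndex →
      α * (H.index : ℝ) ≤ c H ∧ c H ≤ β * (H.index : ℝ))
    (H₁ H₂ : Subgroup G) (h₁ : H₁.FiniteIndex) (h₂ : H₂.FiniteIndex)
    (φ : ↥H₁ ≃* ↥H₂) : H₂.index ≤ H₁.index := by
  by_contra hlt
  push_neg at hlt
  have n₁pos : 0 < H₁.index := Nat.pos_of_ne_zero h₁.index_ne_zero
  have hk : ∀ k : ℕ, α * (H₂.index : ℝ) ^ k ≤ β * (H₁.index : ℝ) ^ k := by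
    intro k
    have hTfin := T_finiteIndex φ h₁ k
    obtain ⟨S, hSfin, hiso, hidx⟩ := key φ h₂ k (T φ k) le_rfl hTfin
    have hc : c ↥S = c ↥(T φ k) := hinv _ _ hiso
    obtain ⟨hb1, -⟩ := hbound S hSfin
    obtain ⟨-, hb2⟩ := hbound (T φ k) hTfin
    have h3 : α * (S.index : ℝ) ≤ β * ((T φ k).index : ℝ) := by
      rw [hc] at hb1; exact hb1.trans hb2
    have hcast : (S.index : ℝ) * (H₁.index : ℝ) ^ k
        = ((T φ k).index : ℝ) * (H₂.index : ℝ) ^ k := by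
      exact_mod_cast congrArg (Nat.cast (R := ℝ)) hidx
    have tpos : (0 : ℝ) < ((T φ k).index : ℝ) := by
      exact_mod_cast Nat.pos_of_ne_zero hTfin.index_ne_zero
    have hn1k : (0 : ℝ) ≤ (H₁.index : ℝ) ^ k := by positivity
    have h4 : α * (S.index : ℝ) * (H₁.index : ℝ) ^ k
        ≤ β * ((T φ k).index : ℝ) * (H₁.index : ℝ) ^ k :=
      mul_le_mul_of_nonneg_right h3 hn1k
    have h5 : ((T φ k).index : ℝ) * (α * (H₂.index : ℝ) ^ k)
        ≤ ((T φ k).index : ℝ) * (β * (H₁.index : ℝ) ^ k) := by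
      nlinarith [hcast, h4]
    exact le_of_mul_le_mul_left h5 tpos
  have hr : 1 < (H₂.index : ℝ) / (H₁.index : ℝ) := by
    rw [lt_div_iff₀ (by exact_mod_cast n₁pos), one_mul]
    exact_mod_cast hlt
  obtain ⟨k, hk'⟩ := pow_unbounded_of_one_lt (β / α) hr
  have hn1k : (0 : ℝ) < (H₁.index : ℝ) ^ k := by
    have : (0:ℝ) < (H₁.index : ℝ) := by exact_mod_cast n₁pos
    positivity
  rw [div_pow, div_lt_div_iff₀ hα hn1k] at hk'
  have := hk k
  linarith

end IndexIsoAux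

/-- If `c` is an isomorphism-invariant real-valued function on groups which is
bounded above and below by positive multiples of the index on finite-index
subgroups of `G`, then isomorphic finite-index subgroups of `G` have the same
index. -/
theorem index_eq_of_iso_of_linear_complexity {G : Type u} [Group G]
    (c : (H : Type u) → [inst : Group H] → ℝ)
    (hinv : ∀ (H₁ H₂ : Type u) [Group H₁] [Group H₂],
      Nonempty (H₁ ≃* H₂) → c H₁ = c H₂)
    (α β : ℝ) (hα : 0 < α) (hαβ : α ≤ β)
    (hbound : ∀ H : Subgroup G, H.FiniteIndex →
      α * (H.index : ℝ) ≤ c H ∧ c H ≤ β * (H.index : ℝ))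
    (H₁ H₂ : Subgroup G) (h₁ : H₁.FiniteIndex) (h₂ : H₂.FiniteIndex)
    (hiso : Nonempty (H₁ ≃* H₂)) :
    H₁.index = H₂.index := by
  obtain ⟨φ⟩ := hiso
  exact le_antisymm
    (IndexIsoAux.index_le c hinv α β hα hbound H₂ H₁ h₂ h₁ φ.symm)
    (IndexIsoAux.index_le c hinv α β hα hbound H₁ H₂ h₁ h₂ φ)
end

section
/- Let G be a group and let c be a real-valued function on the set of subgroups of G. Suppose there exist real numbers 0 < α ≤ β such that α·[G:K] ≤ c(K) ≤ β·[G:K] for every finite-index subgroup K ≤ G. For a finite-index subgroup H ≤ G, define c̲(H) := sup over finite-index subgroups K₀ ≤ G with K₀ ≤ H of ( inf over finite-index subgroups K ≤ G with K ≤ K₀ of c(K)/[H:K] ). Then c̲ is multiplicative: for every finite-index subgroup H ≤ G one has c̲(H) = [G:H] · c̲(G), where c̲(G) is obtained from the same definition with H = G. -/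
open Subgroup Pointwise

section CbarAux

variable {G : Type*} [Group G]

/-- The inner set of quotients `c K / K.index`. -/
private def U (c : Subgroup G → ℝ) (K₀ : Subgroup G) : Set ℝ :=
  {y : ℝ | ∃ K : Subgroup G, K.FiniteIndex ∧ K ≤ K₀ ∧ y = c K / (K.index : ℝ)}

private lemma relindex_cast_eq (c : Subgroup G → ℝ) {K H' : Subgroup G}
    (hK : K.FiniteIndex) (hH' : H'.FiniteIndex) (h : K ≤ H') :
    c K / (K.relIndex H' : ℝ) = (H'.index : ℝ) * (c K / (K.index : ℝ)) := by
  have hm : ((K.relIndex H' : ℝ)) * (H'.index : ℝ) = (K.index : ℝ) := by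
    exact_mod_cast Subgroup.relIndex_mul_index h
  have hKi : (K.index : ℝ) ≠ 0 := Nat.cast_ne_zero.mpr hK.index_ne_zero
  have hHi : (H'.index : ℝ) ≠ 0 := Nat.cast_ne_zero.mpr hH'.index_ne_zero
  have hr : (K.relIndex H' : ℝ) ≠ 0 := by
    intro h0; rw [h0, zero_mul] at hm; exact hKi hm.symm
  field_simp
  rw [← hm]; ring

private lemma T_eq (c : Subgroup G → ℝ) {K₀ H' : Subgroup G}
    (hH' : H'.FiniteIndex) (hle : K₀ ≤ H') :
    {y : ℝ | ∃ K : Subgroup G, K.FiniteIndex ∧ K ≤ K₀ ∧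
        y = c K / (K.relIndex H' : ℝ)} = (H'.index : ℝ) • U c K₀ := by
  ext y
  constructor
  · rintro ⟨K, hK, hKK₀, rfl⟩
    exact ⟨c K / (K.index : ℝ), ⟨K, hK, hKK₀, rfl⟩,
      by simp only [smul_eq_mul]; rw [← relindex_cast_eq c hK hH' (hKK₀.trans hle)]⟩
  · rintro ⟨z, ⟨K, hK, hKK₀, rfl⟩, rfl⟩
    exact ⟨K, hK, hKK₀, by simp only [smul_eq_mul]; rw [← relindex_cast_eq c hK hH' (hKK₀.trans hle)]⟩

end CbarAux

/-- Suppose `c` is a real-valued function on subgroups of `G` with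
`α·[G:K] ≤ c(K) ≤ β·[G:K]` for all finite-index `K` (where `0 < α ≤ β`).
Define `c̲(H) = sup_{K₀ ≤ H fin.idx} inf_{K ≤ K₀ fin.idx} c(K)/[H:K]`.
Then `c̲` is multiplicative: `c̲(H) = [G:H]·c̲(G)` for every finite-index `H`. -/
theorem cbar_multiplicative {G : Type*} [Group G]
    (c : Subgroup G → ℝ) (α β : ℝ) (hα : 0 < α) (hαβ : α ≤ β)
    (hbound : ∀ K : Subgroup G, K.FiniteIndex →
      α * (K.index : ℝ) ≤ c K ∧ c K ≤ β * (K.index : ℝ))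
    (cbar : Subgroup G → ℝ)
    (hcbar : ∀ H : Subgroup G,
      cbar H = sSup {x : ℝ | ∃ K₀ : Subgroup G, K₀.FiniteIndex ∧ K₀ ≤ H ∧
        x = sInf {y : ℝ | ∃ K : Subgroup G, K.FiniteIndex ∧ K ≤ K₀ ∧
          y = c K / (K.relIndex H : ℝ)}}) :
    ∀ H : Subgroup G, H.FiniteIndex → cbar H = (H.index : ℝ) * cbar ⊤ := by
  -- basic facts about U
  have hUlb : ∀ K₀ : Subgroup G, ∀ y ∈ U c K₀, α ≤ y := by
    rintro K₀ y ⟨K, hK, -, rfl⟩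
    have hKi : (0 : ℝ) < (K.index : ℝ) := by
      exact_mod_cast Nat.pos_of_ne_zero hK.index_ne_zero
    rw [le_div_iff₀ hKi]
    exact (hbound K hK).1
  have hUbdd : ∀ K₀ : Subgroup G, BddBelow (U c K₀) := fun K₀ => ⟨α, hUlb K₀⟩
  have hUne : ∀ K₀ : Subgroup G, K₀.FiniteIndex → (U c K₀).Nonempty := by
    intro K₀ hK₀; exact ⟨c K₀ / (K₀.index : ℝ), K₀, hK₀, le_rfl, rfl⟩
  have hUub : ∀ K₀ : Subgroup G, K₀.FiniteIndex → sInf (U c K₀) ≤ β := by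
    intro K₀ hK₀
    have hKi : (0 : ℝ) < (K₀.index : ℝ) := by
      exact_mod_cast Nat.pos_of_ne_zero hK₀.index_ne_zero
    refine (csInf_le (hUbdd K₀) ⟨K₀, hK₀, le_rfl, rfl⟩).trans ?_
    rw [div_le_iff₀ hKi]
    exact (hbound K₀ hK₀).2
  have hUlb' : ∀ K₀ : Subgroup G, K₀.FiniteIndex → α ≤ sInf (U c K₀) := by
    intro K₀ hK₀; exact le_csInf (hUne K₀ hK₀) (hUlb K₀)
  have hUmono : ∀ K₀ K₁ : Subgroup G, K₁.FiniteIndex → K₁ ≤ K₀ →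
      sInf (U c K₀) ≤ sInf (U c K₁) := by
    intro K₀ K₁ hK₁ h
    refine csInf_le_csInf (hUbdd K₀) (hUne K₁ hK₁) ?_
    rintro y ⟨K, hK, hKK₁, rfl⟩
    exact ⟨K, hK, hKK₁.trans h, rfl⟩
  -- sInf of scaled inner set
  have hsInfT : ∀ (H' K₀ : Subgroup G), H'.FiniteIndex → K₀.FiniteIndex → K₀ ≤ H' →
      sInf {y : ℝ | ∃ K : Subgroup G, K.FiniteIndex ∧ K ≤ K₀ ∧
        y = c K / (K.relIndex H' : ℝ)} = (H'.index : ℝ) * sInf (U c K₀) := by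
    intro H' K₀ hH' hK₀ hle
    have hnn : (0 : ℝ) ≤ (H'.index : ℝ) := Nat.cast_nonneg _
    rw [T_eq c hH' hle, Real.sInf_smul_of_nonneg hnn, smul_eq_mul]
  intro H hH
  haveI := hH
  have hHpos : (0 : ℝ) < (H.index : ℝ) := by
    exact_mod_cast Nat.pos_of_ne_zero hH.index_ne_zero
  rw [hcbar H, hcbar ⊤]
  set SH := {x : ℝ | ∃ K₀ : Subgroup G, K₀.FiniteIndex ∧ K₀ ≤ H ∧
        x = sInf {y : ℝ | ∃ K : Subgroup G, K.FiniteIndex ∧ K ≤ K₀ ∧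
          y = c K / (K.relIndex H : ℝ)}} with hSH
  set ST := {x : ℝ | ∃ K₀ : Subgroup G, K₀.FiniteIndex ∧ K₀ ≤ (⊤ : Subgroup G) ∧
        x = sInf {y : ℝ | ∃ K : Subgroup G, K.FiniteIndex ∧ K ≤ K₀ ∧
          y = c K / (K.relIndex ⊤ : ℝ)}} with hST
  have hTop : (⊤ : Subgroup G).FiniteIndex := Subgroup.instFiniteIndexTop
  -- members of SH equal H.index * sInf (U c K₀)
  have hSHmem : ∀ x ∈ SH, ∃ K₀ : Subgroup G, K₀.FiniteIndex ∧ K₀ ≤ H ∧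
      x = (H.index : ℝ) * sInf (U c K₀) := by
    rintro x ⟨K₀, hK₀, hle, rfl⟩
    exact ⟨K₀, hK₀, hle, hsInfT H K₀ hH hK₀ hle⟩
  have hSTmem : ∀ x ∈ ST, ∃ K₀ : Subgroup G, K₀.FiniteIndex ∧
      x = sInf (U c K₀) := by
    rintro x ⟨K₀, hK₀, -, rfl⟩
    refine ⟨K₀, hK₀, ?_⟩
    rw [hsInfT ⊤ K₀ hTop hK₀ le_top, Subgroup.index_top, Nat.cast_one, one_mul]
  have hSTmem' : ∀ K₀ : Subgroup G, K₀.FiniteIndex → sInf (U c K₀) ∈ ST := by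
    intro K₀ hK₀
    exact ⟨K₀, hK₀, le_top,
      by rw [hsInfT ⊤ K₀ hTop hK₀ le_top, Subgroup.index_top, Nat.cast_one, one_mul]⟩
  have hSHmem' : ∀ K₀ : Subgroup G, K₀.FiniteIndex → K₀ ≤ H →
      (H.index : ℝ) * sInf (U c K₀) ∈ SH := by
    intro K₀ hK₀ hle
    exact ⟨K₀, hK₀, hle, (hsInfT H K₀ hH hK₀ hle).symm⟩
  have hSHne : SH.Nonempty := ⟨_, hSHmem' H hH le_rfl⟩
  have hSTne : ST.Nonempty := ⟨_, hSTmem' ⊤ hTop⟩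
  have hSHbdd : BddAbove SH := by
    refine ⟨β * (H.index : ℝ), ?_⟩
    intro x hx
    obtain ⟨K₀, hK₀, hle, rfl⟩ := hSHmem x hx
    rw [mul_comm β]
    exact mul_le_mul_of_nonneg_left (hUub K₀ hK₀) hHpos.le
  have hSTbdd : BddAbove ST := by
    refine ⟨β, ?_⟩
    intro x hx
    obtain ⟨K₀, hK₀, rfl⟩ := hSTmem x hx
    exact hUub K₀ hK₀
  apply le_antisymm
  · refine csSup_le hSHne ?_
    intro x hx
    obtain ⟨K₀, hK₀, hle, rfl⟩ := hSHmem x hx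
    exact mul_le_mul_of_nonneg_left (le_csSup hSTbdd (hSTmem' K₀ hK₀)) hHpos.le
  · have h2 : sSup ST ≤ sSup SH / (H.index : ℝ) := by
      refine csSup_le hSTne ?_
      intro y hy
      obtain ⟨K₀, hK₀, rfl⟩ := hSTmem y hy
      haveI := hK₀
      have hinf : (K₀ ⊓ H).FiniteIndex := inferInstance
      have step1 : sInf (U c K₀) ≤ sInf (U c (K₀ ⊓ H)) :=
        hUmono K₀ (K₀ ⊓ H) hinf inf_le_left
      have step2 : (H.index : ℝ) * sInf (U c (K₀ ⊓ H)) ≤ sSup SH :=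
        le_csSup hSHbdd (hSHmem' (K₀ ⊓ H) hinf inf_le_right)
      rw [le_div_iff₀ hHpos]
      calc sInf (U c K₀) * (H.index : ℝ) = (H.index : ℝ) * sInf (U c K₀) := mul_comm _ _
        _ ≤ (H.index : ℝ) * sInf (U c (K₀ ⊓ H)) :=
            mul_le_mul_of_nonneg_left step1 hHpos.le
        _ ≤ sSup SH := step2
    calc (H.index : ℝ) * sSup ST ≤ (H.index : ℝ) * (sSup SH / (H.index : ℝ)) :=
          mul_le_mul_of_nonneg_left h2 hHpos.le
      _ = sSup SH := by field_simp
end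

section
/- Let X be a connected simple graph with vertex set V and graph distance d, and let q assign to every ordered pair (x,y) of vertices a rational 1-chain q(x,y) on X such that: ∂q(x,y) = 𝟙_y − 𝟙_x for all x,y; there is a constant δ₁ ≥ 0 such that for every geodesic γ from x to y, every unoriented edge {u,v} with q(x,y)(u,v) ≠ 0 lies within distance δ₁ of some vertex of γ; there is a constant C ≥ 0 with ‖q(x,y)‖₁ ≤ C·d(x,y) for all x,y; and there is a constant D ≥ 0 with ‖q(x,y) + q(y,z) + q(z,x)‖₁ ≤ D for all x,y,z. Then for all x,y ∈ V, ‖q(x,y)‖_∞ ≤ 2C(δ₁ + 1) + 2D. -/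
open scoped Classical

/-- A rational 1-chain on a simple graph `X`: a finitely supported antisymmetric
function on ordered pairs of adjacent vertices. -/
structure OneChain {V : Type*} (X : SimpleGraph V) where
  val : V → V → ℚ
  antisymm : ∀ u v, val u v = - val v u
  adj_support : ∀ u v, ¬ X.Adj u v → val u v = 0
  finite_support : {p : V × V | val p.1 p.2 ≠ 0}.Finite

namespace OneChain

variable {V : Type*} {X : SimpleGraph V}

/-- The boundary of a 1-chain: `∂a(v) = Σ_{u adjacent to v} a(u,v)`. -/
noncomputable def boundary (a : OneChain X) (v : V) : ℚ :=
  ∑ᶠ u, a.val u v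

/-- The ℓ1-norm of a 1-chain, with one term per unoriented edge. -/
noncomputable def l1 (a : OneChain X) : ℚ :=
  (∑ᶠ p : V × V, |a.val p.1 p.2|) / 2

/-- Pointwise sum of two 1-chains. -/
def add (a b : OneChain X) : OneChain X where
  val u v := a.val u v + b.val u v
  antisymm u v := by (try simp only []); rw [a.antisymm u v, b.antisymm u v]; ring
  adj_support u v h := by (try simp only []); rw [a.adj_support u v h, b.adj_support u v h]; ring
  finite_support := by
    apply (a.finite_support.union b.finite_support).subset
    intro p hp
    by_contra h
    simp only [Set.mem_union, Set.mem_setOf_eq, not_or, not_not] at h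
    exact hp (by simp [h.1, h.2])

end OneChain

open OneChain

section Helpers

open SimpleGraph

lemma exists_walk_getVert_zero {V : Type*} {G : SimpleGraph V} :
    ∀ {x y : V} (p : G.Walk x y) (j : ℕ), j ≤ p.length →
      ∃ w : G.Walk x (p.getVert j), w.length = j := by
  intro x y p
  induction p with
  | nil =>
    intro j hj
    simp only [Walk.length_nil, Nat.le_zero] at hj
    subst hj
    exact ⟨Walk.nil, rfl⟩
  | cons h q ih =>
    intro j hj
    cases j with
    | zero => exact ⟨Walk.nil.copy rfl (Walk.getVert_zero _).symm, by simp⟩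
    | succ j =>
      obtain ⟨w, hw⟩ := ih j (by simpa using hj)
      exact ⟨Walk.cons h w, by simp [hw]⟩

lemma exists_walk_getVert {V : Type*} {G : SimpleGraph V} :
    ∀ {x y : V} (p : G.Walk x y) (i j : ℕ), i ≤ j → j ≤ p.length →
      ∃ w : G.Walk (p.getVert i) (p.getVert j), w.length = j - i := by
  intro x y p
  induction p with
  | nil =>
    intro i j hij hj
    simp only [Walk.length_nil, Nat.le_zero] at hj
    subst hj
    simp only [Nat.le_zero] at hij
    subst hij
    exact ⟨Walk.nil, rfl⟩
  | cons h q ih =>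
    intro i j hij hj
    cases i with
    | zero =>
      obtain ⟨w, hw⟩ := exists_walk_getVert_zero (Walk.cons h q) j hj
      exact ⟨w.copy (Walk.getVert_zero _).symm rfl, by simp [hw]⟩
    | succ i =>
      cases j with
      | zero => omega
      | succ j =>
        obtain ⟨w, hw⟩ := ih i j (by omega) (by simpa using hj)
        exact ⟨w, hw.trans (by omega)⟩

lemma dist_getVert_le {V : Type*} {G : SimpleGraph V} {x y : V} (p : G.Walk x y) (k : ℕ) :
    G.dist x (p.getVert k) ≤ k := by
  rcases le_or_gt k p.length with hk | hk
  · obtain ⟨w, hw⟩ := exists_walk_getVert_zero p k hk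
    have h2 := SimpleGraph.dist_le w
    omega
  · rw [p.getVert_of_length_le hk.le]
    exact le_trans (SimpleGraph.dist_le p) hk.le

lemma getVert_dist_le {V : Type*} {G : SimpleGraph V} {x y : V} (p : G.Walk x y) (k : ℕ) :
    G.dist (p.getVert k) y ≤ p.length - k := by
  rcases le_or_gt k p.length with hk | hk
  · obtain ⟨w, hw⟩ := exists_walk_getVert p k p.length hk le_rfl
    have h2 := SimpleGraph.dist_le w
    rw [hw] at h2
    rw [show p.getVert p.length = y from p.getVert_length] at h2
    omega
  · rw [p.getVert_of_length_le hk.le]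
    simp [SimpleGraph.dist_self]

end Helpers

lemma abs_val_le_l1 {V : Type*} {X : SimpleGraph V} (a : OneChain X) (u v : V) :
    |a.val u v| ≤ a.l1 := by
  have hfin : (Function.support fun p : V × V => |a.val p.1 p.2|).Finite := by
    apply a.finite_support.subset
    intro p hp
    simp only [Function.mem_support, ne_eq, abs_eq_zero] at hp
    exact hp
  have hsum : ∑ᶠ p : V × V, |a.val p.1 p.2| = ∑ p ∈ hfin.toFinset, |a.val p.1 p.2| :=
    finsum_eq_sum _ hfin
  by_cases h0 : a.val u v = 0
  · rw [h0, abs_zero]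
    rw [OneChain.l1, hsum]
    positivity
  · have huv : u ≠ v := by
      intro h; subst h
      have := a.antisymm u u
      apply h0; linarith
    have h1 : ((u, v) : V × V) ∈ hfin.toFinset := by
      simp only [Set.Finite.mem_toFinset, Function.mem_support]
      simpa using h0
    have h2 : ((v, u) : V × V) ∈ hfin.toFinset := by
      simp only [Set.Finite.mem_toFinset, Function.mem_support]
      simp only [ne_eq, abs_eq_zero]
      rw [a.antisymm v u]
      simpa using h0
    have hsub : ({(u, v), (v, u)} : Finset (V × V)) ⊆ hfin.toFinset := by
      intro p hp
      simp only [Finset.mem_insert, Finset.mem_singleton] at hp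
      rcases hp with rfl | rfl
      · exact h1
      · exact h2
    have hle : ∑ p ∈ ({(u, v), (v, u)} : Finset (V × V)), |a.val p.1 p.2|
        ≤ ∑ p ∈ hfin.toFinset, |a.val p.1 p.2| := by
      apply Finset.sum_le_sum_of_subset_of_nonneg hsub
      intro p _ _
      positivity
    have hpair : ∑ p ∈ ({(u, v), (v, u)} : Finset (V × V)), |a.val p.1 p.2|
        = 2 * |a.val u v| := by
      rw [Finset.sum_pair (by simp [huv, Prod.ext_iff])]
      have : |a.val v u| = |a.val u v| := by rw [a.antisymm v u, abs_neg]
      rw [this]; ring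
    rw [OneChain.l1, hsum]
    rw [hpair] at hle
    linarith

/-- If a bicombing `q` is quasigeodesic with constant `δ₁`, has
`‖q(x,y)‖₁ ≤ C·d(x,y)` and defect at most `D`, then
`‖q(x,y)‖_∞ ≤ 2C(δ₁ + 1) + 2D`. -/
theorem linfty_bound_of_quasigeodesic {V : Type*} (X : SimpleGraph V) (hconn : X.Connected)
    (q : V → V → OneChain X)
    (hbdry : ∀ x y v, (q x y).boundary v =
      (if v = y then (1 : ℚ) else 0) - (if v = x then (1 : ℚ) else 0))
    (δ₁ : ℝ) (hδ₁ : 0 ≤ δ₁)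
    (hgeo : ∀ (x y : V) (p : X.Walk x y), p.length = X.dist x y →
      ∀ u v : V, (q x y).val u v ≠ 0 →
        ∃ w ∈ p.support, (X.dist u w : ℝ) ≤ δ₁ ∧ (X.dist v w : ℝ) ≤ δ₁)
    (C : ℝ) (hC : 0 ≤ C)
    (hl1 : ∀ x y : V, (((q x y).l1 : ℝ)) ≤ C * (X.dist x y : ℝ))
    (D : ℝ) (hD : 0 ≤ D)
    (hdefect : ∀ x y z : V, (((((q x y).add (q y z)).add (q z x)).l1 : ℝ)) ≤ D) :
    ∀ x y u v : V, ((|(q x y).val u v| : ℝ)) ≤ 2 * C * (δ₁ + 1) + 2 * D := by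
  intro x y u v
  -- q z z vanishes pointwise
  have hzero : ∀ z : V, (q z z).val u v = 0 := by
    intro z
    have h1 := hl1 z z
    rw [SimpleGraph.dist_self] at h1
    norm_num at h1
    have h2 : ((|(q z z).val u v| : ℚ) : ℝ) ≤ ((q z z).l1 : ℝ) := by
      exact_mod_cast abs_val_le_l1 (q z z) u v
    have h3 : ((|(q z z).val u v| : ℚ) : ℝ) ≤ 0 := le_trans h2 (by exact_mod_cast h1)
    have h4 : |(q z z).val u v| ≤ 0 := by exact_mod_cast h3
    exact abs_nonpos_iff.mp h4
  obtain ⟨p, hp⟩ := hconn.exists_walk_length_eq_dist x y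
  set L := X.dist x y with hLdef
  set s := X.dist x u with hsdef
  set m : ℕ := ⌊δ₁⌋₊ + 1 with hmdef
  have hmδ : δ₁ < (m : ℝ) := by
    have := Nat.lt_floor_add_one δ₁
    push_cast
    exact_mod_cast this
  have hmδ' : (m : ℝ) ≤ δ₁ + 1 := by
    have := Nat.floor_le hδ₁
    push_cast
    linarith [show (m:ℝ) = ⌊δ₁⌋₊ + 1 by rw [hmdef]; push_cast; ring]
  set pa := min L (s - m) with hpadef
  set pb := min L (s + m) with hpbdef
  have hpaL : pa ≤ L := by omega
  have hpbL : pb ≤ L := by omega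
  have hpapb : pa ≤ pb := by omega
  set a := p.getVert pa with hadef
  set b := p.getVert pb with hbdef
  -- (q a x).val u v = 0
  have hax : (q a x).val u v = 0 := by
    by_cases hpa0 : pa = 0
    · have ha : a = x := by rw [hadef, hpa0, SimpleGraph.Walk.getVert_zero]
      rw [ha]; exact hzero x
    · have hpas : pa + m ≤ s := by omega
      obtain ⟨w, hw⟩ := exists_walk_getVert_zero p pa (by omega)
      have hdxa : X.dist x a = pa := by
        have hle : X.dist x a ≤ pa := dist_getVert_le p pa
        have h1 : X.dist a y ≤ p.length - pa := getVert_dist_le p pa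
        have h2 : X.dist x y ≤ X.dist x a + X.dist a y := hconn.dist_triangle
        omega
      by_contra hne
      obtain ⟨w0, hmem, hw0u, _⟩ := hgeo a x w.reverse
        (by rw [SimpleGraph.Walk.length_reverse, hw, SimpleGraph.dist_comm, hdxa]) u v hne
      rw [SimpleGraph.Walk.support_reverse, List.mem_reverse] at hmem
      obtain ⟨k, hkeq, hkle⟩ := SimpleGraph.Walk.mem_support_iff_exists_getVert.mp hmem
      have d1 : X.dist x w0 ≤ k := hkeq ▸ dist_getVert_le w k
      have d2 : X.dist x u ≤ X.dist x w0 + X.dist w0 u := hconn.dist_triangle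
      have d3 : m ≤ X.dist w0 u := by
        rw [hw] at hkle
        omega
      have d4 : (m : ℝ) ≤ (X.dist u w0 : ℝ) := by
        rw [SimpleGraph.dist_comm]
        exact_mod_cast d3
      linarith
  -- (q b y).val u v = 0
  have hby : (q b y).val u v = 0 := by
    by_cases hpbL' : pb = L
    · have hb : b = y := by
        rw [hbdef, SimpleGraph.Walk.getVert_of_length_le p (by omega)]
      rw [hb]; exact hzero y
    · have hpbs : pb = s + m := by omega
      obtain ⟨w, hw⟩ := exists_walk_getVert p pb p.length (by omega) le_rfl
      have hdby : X.dist b y = L - pb := by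
        have hle : X.dist b y ≤ p.length - pb := getVert_dist_le p pb
        have h1 : X.dist x b ≤ pb := dist_getVert_le p pb
        have h2 : X.dist x y ≤ X.dist x b + X.dist b y := hconn.dist_triangle
        omega
      have hwlen : (w.copy rfl p.getVert_length).length = X.dist b y := by
        rw [SimpleGraph.Walk.length_copy, hw, hdby, hp]
      by_contra hne
      obtain ⟨w0, hmem, hw0u, _⟩ := hgeo b y (w.copy rfl p.getVert_length) hwlen u v hne
      obtain ⟨k, hkeq, hkle⟩ := SimpleGraph.Walk.mem_support_iff_exists_getVert.mp hmem
      have d1 : X.dist w0 y ≤ (w.copy rfl p.getVert_length).length - k := by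
        rw [← hkeq]
        exact getVert_dist_le _ k
      rw [SimpleGraph.Walk.length_copy, hw] at d1
      have d2 : X.dist x y ≤ X.dist x w0 + X.dist w0 y := hconn.dist_triangle
      have d3 : X.dist x w0 ≤ X.dist x u + X.dist u w0 := hconn.dist_triangle
      have d4 : m ≤ X.dist u w0 := by omega
      have d5 : (m : ℝ) ≤ (X.dist u w0 : ℝ) := by exact_mod_cast d4
      linarith
  -- |(q a b).val u v| ≤ C * (2δ₁ + 2)
  have hab : ((|(q a b).val u v| : ℚ) : ℝ) ≤ C * (2 * δ₁ + 2) := by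
    have h1 : X.dist a b ≤ pb - pa := by
      obtain ⟨w, hw⟩ := exists_walk_getVert p pa pb hpapb (by omega)
      exact le_trans (SimpleGraph.dist_le w) (le_of_eq hw)
    have h2 : pb - pa ≤ 2 * m := by omega
    have h3 : ((X.dist a b : ℕ) : ℝ) ≤ 2 * δ₁ + 2 := by
      have h3' : ((X.dist a b : ℕ) : ℝ) ≤ 2 * ((m : ℕ) : ℝ) := by
        exact_mod_cast le_trans h1 h2
      linarith
    have h4 : ((|(q a b).val u v| : ℚ) : ℝ) ≤ ((q a b).l1 : ℝ) := by
      exact_mod_cast abs_val_le_l1 (q a b) u v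
    have h5 := hl1 a b
    nlinarith [SimpleGraph.dist_le (p := p) , hC]
  -- defect bounds
  have T1 : |((q x y).val u v : ℝ) + ((q y a).val u v : ℝ) + ((q a x).val u v : ℝ)| ≤ D := by
    have h := hdefect x y a
    have h2 : |(((q x y).add (q y a)).add (q a x)).val u v|
        ≤ ((((q x y).add (q y a)).add (q a x))).l1 := abs_val_le_l1 _ u v
    have h3 : (((q x y).add (q y a)).add (q a x)).val u v
        = (q x y).val u v + (q y a).val u v + (q a x).val u v := rfl
    rw [h3] at h2
    have h4 : ((|(q x y).val u v + (q y a).val u v + (q a x).val u v| : ℚ) : ℝ) ≤ D :=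
      le_trans (by exact_mod_cast h2) h
    push_cast at h4
    exact h4
  have T2 : |((q a b).val u v : ℝ) + ((q b y).val u v : ℝ) + ((q y a).val u v : ℝ)| ≤ D := by
    have h := hdefect a b y
    have h2 : |(((q a b).add (q b y)).add (q y a)).val u v|
        ≤ ((((q a b).add (q b y)).add (q y a))).l1 := abs_val_le_l1 _ u v
    have h3 : (((q a b).add (q b y)).add (q y a)).val u v
        = (q a b).val u v + (q b y).val u v + (q y a).val u v := rfl
    rw [h3] at h2
    have h4 : ((|(q a b).val u v + (q b y).val u v + (q y a).val u v| : ℚ) : ℝ) ≤ D :=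
      le_trans (by exact_mod_cast h2) h
    push_cast at h4
    exact h4
  rw [hax] at T1
  rw [hby] at T2
  push_cast at T1 T2 ⊢
  set α : ℝ := ((q x y).val u v : ℝ)
  set β : ℝ := ((q y a).val u v : ℝ)
  set γ : ℝ := ((q a b).val u v : ℝ)
  have g1 : |α| ≤ |α + β + 0| + |β| := by
    have h := abs_add_le (α + β) (-β)
    have e : α + β + -β = α := by ring
    rw [e, abs_neg] at h
    have e2 : α + β + 0 = α + β := by ring
    rw [e2]
    exact h
  have g2 : |β| ≤ |γ + 0 + β| + |γ| := by
    have h := abs_add_le (γ + β) (-γ)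
    have e : γ + β + -γ = β := by ring
    rw [e, abs_neg] at h
    have e2 : γ + 0 + β = γ + β := by ring
    rw [e2]
    exact h
  have habs : |γ| ≤ C * (2 * δ₁ + 2) := by
    have := hab
    push_cast at this
    exact this
  nlinarith [T1, T2, g1, g2, habs]
end

section
/- Let X be a connected simple graph with vertex set V and graph distance d, and let q assign to every ordered pair (x,y) of vertices a rational 1-chain q(x,y) on X such that ∂q(x,y) = 𝟙_y − 𝟙_x for all x,y, and such that there is a constant δ₁ ≥ 0 for which, for every geodesic γ from x to y, every unoriented edge {u,v} with q(x,y)(u,v) ≠ 0 lies within distance δ₁ of some vertex of γ. Set ρ = 2δ₁ + 1. Then for all x ≠ y in V and every vertex z with d(x,z) + d(z,y) = d(x,y), the restriction of q(x,y) to the edges lying within distance ρ of z has ℓ1-norm at least 1; that is, Σ |q(x,y)(u,v)| ≥ 1, where the sum ranges over unoriented edges {u,v} with d(u,z) ≤ ρ and d(v,z) ≤ ρ. -/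
open scoped Classical

open OneChain

lemma geodesic_support_dist {V : Type*} [DecidableEq V] {X : SimpleGraph V}
    (hconn : X.Connected)
    {x y w : V} (p : X.Walk x y) (hp : p.length = X.dist x y) (hw : w ∈ p.support) :
    X.dist x w + X.dist w y = X.dist x y := by
  have h1 := SimpleGraph.dist_le (p.takeUntil w hw)
  have h2 := SimpleGraph.dist_le (p.dropUntil w hw)
  have h3 : (p.takeUntil w hw).length + (p.dropUntil w hw).length = p.length := by
    rw [← SimpleGraph.Walk.length_append, p.take_spec hw]
  have h4 := hconn.dist_triangle (u := x) (v := w) (w := y)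
  omega

/-- If `q` is a quasigeodesic bicombing with constant `δ₁` and `z` lies on a
geodesic between `x ≠ y`, then the restriction of `q(x,y)` to the edges within
distance `ρ = 2δ₁ + 1` of `z` has ℓ1-norm at least 1. -/
theorem restricted_l1_ge_one {V : Type*} (X : SimpleGraph V) (hconn : X.Connected)
    (q : V → V → OneChain X)
    (hbdry : ∀ x y v, (q x y).boundary v =
      (if v = y then (1 : ℚ) else 0) - (if v = x then (1 : ℚ) else 0))
    (δ₁ : ℝ) (hδ₁ : 0 ≤ δ₁)
    (hgeo : ∀ (x y : V) (p : X.Walk x y), p.length = X.dist x y →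
      ∀ u v : V, (q x y).val u v ≠ 0 →
        ∃ w ∈ p.support, (X.dist u w : ℝ) ≤ δ₁ ∧ (X.dist v w : ℝ) ≤ δ₁)
    (x y z : V) (hxy : x ≠ y)
    (hz : X.dist x z + X.dist z y = X.dist x y) :
    1 ≤ (∑ᶠ p : V × V,
        if (X.dist p.1 z : ℝ) ≤ 2 * δ₁ + 1 ∧ (X.dist p.2 z : ℝ) ≤ 2 * δ₁ + 1
        then |(q x y).val p.1 p.2| else 0) / 2 := by
  classical
  set a := q x y with ha
  have hd1 : 1 ≤ X.dist x y := hconn.pos_dist_of_ne hxy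
  have hxzle : X.dist x z ≤ X.dist x y := by omega
  set k : ℕ := min (X.dist x z) (X.dist x y - 1) with hkdef
  have hk1 : k < X.dist x y := by omega
  have hk2 : k ≤ X.dist x z := by omega
  have hk3 : X.dist x z ≤ k + 1 := by omega
  set T : Finset (V × V) := a.finite_support.toFinset with hT
  have hmemT : ∀ p : V × V, p ∈ T ↔ a.val p.1 p.2 ≠ 0 :=
    fun p => Set.Finite.mem_toFinset _
  set W : Finset V := T.image Prod.fst ∪ T.image Prod.snd ∪ {x, y} with hW
  have hfstW : ∀ p ∈ T, p.1 ∈ W := by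
    intro p hp
    exact Finset.mem_union_left _ (Finset.mem_union_left _ (Finset.mem_image_of_mem _ hp))
  have hsndW : ∀ p ∈ T, p.2 ∈ W := by
    intro p hp
    exact Finset.mem_union_left _ (Finset.mem_union_right _ (Finset.mem_image_of_mem _ hp))
  have hxW : x ∈ W := Finset.mem_union_right _ (by simp)
  have hyW : y ∈ W := Finset.mem_union_right _ (by simp)
  set S : Finset V := W.filter (fun v => X.dist x v ≤ k) with hS
  -- boundary as finite sum over W
  have hbd : ∀ v, a.boundary v = ∑ u ∈ W, a.val u v := by
    intro v
    apply finsum_eq_sum_of_support_subset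
    intro u hu
    exact hfstW (u, v) ((hmemT (u, v)).2 hu)
  have hxS : x ∈ S := by
    refine Finset.mem_filter.2 ⟨hxW, ?_⟩
    rw [SimpleGraph.dist_self]
    exact Nat.zero_le _
  have hyS : y ∉ S := by
    intro h
    have := (Finset.mem_filter.1 h).2
    omega
  have hsum1 : ∑ v ∈ S, a.boundary v = -1 := by
    rw [Finset.sum_congr rfl (fun v _ => hbdry x y v), Finset.sum_sub_distrib,
      Finset.sum_ite_eq' S y (fun _ => (1 : ℚ)), Finset.sum_ite_eq' S x (fun _ => (1 : ℚ))]
    simp [hxS, hyS]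
  have hsum2 : ∑ v ∈ S, ∑ u ∈ W, a.val u v = -1 := by
    rw [← hsum1]
    exact Finset.sum_congr rfl fun v _ => (hbd v).symm
  have hSW : S ⊆ W := Finset.filter_subset _ _
  have hzero : ∑ v ∈ S, ∑ u ∈ S, a.val u v = 0 := by
    have h2 : ∑ v ∈ S, ∑ u ∈ S, a.val u v = ∑ v ∈ S, ∑ u ∈ S, (- a.val v u) :=
      Finset.sum_congr rfl fun v _ => Finset.sum_congr rfl fun u _ => a.antisymm u v
    have h3 : ∑ v ∈ S, ∑ u ∈ S, a.val v u = ∑ v ∈ S, ∑ u ∈ S, a.val u v :=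
      Finset.sum_comm
    simp only [Finset.sum_neg_distrib] at h2
    rw [h3] at h2
    linarith
  have hcross : ∑ v ∈ S, ∑ u ∈ W \ S, a.val u v = -1 := by
    have h := hsum2
    rw [Finset.sum_congr rfl (fun v (_ : v ∈ S) => (Finset.sum_sdiff hSW).symm),
      Finset.sum_add_distrib, hzero, add_zero] at h
    exact h
  set C : Finset (V × V) := T.filter (fun p => ¬ X.dist x p.1 ≤ k ∧ X.dist x p.2 ≤ k) with hC
  have hCT : C ⊆ T := Finset.filter_subset _ _
  have hCsub : C ⊆ (W \ S) ×ˢ S := by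
    intro p hp
    rw [hC, Finset.mem_filter] at hp
    obtain ⟨hpT, h1, h2⟩ := hp
    rw [Finset.mem_product, Finset.mem_sdiff]
    refine ⟨⟨hfstW _ hpT, fun hmem => h1 (Finset.mem_filter.1 hmem).2⟩,
      Finset.mem_filter.2 ⟨hsndW _ hpT, h2⟩⟩
  have hCsum : ∑ p ∈ C, a.val p.1 p.2 = -1 := by
    have hprod : ∑ p ∈ (W \ S) ×ˢ S, a.val p.1 p.2 = ∑ u ∈ W \ S, ∑ v ∈ S, a.val u v :=
      Finset.sum_product' _ _ _
    have hcross2 : ∑ u ∈ W \ S, ∑ v ∈ S, a.val u v = -1 := by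
      rw [Finset.sum_comm]; exact hcross
    rw [← hcross2, ← hprod]
    apply Finset.sum_subset hCsub
    intro p hp hnp
    by_contra hne
    apply hnp
    rw [Finset.mem_product, Finset.mem_sdiff] at hp
    refine Finset.mem_filter.2 ⟨(hmemT p).2 hne, fun hle => hp.1.2
      (Finset.mem_filter.2 ⟨hp.1.1, hle⟩), (Finset.mem_filter.1 hp.2).2⟩
  -- geometric claim
  have hgeoclaim : ∀ p ∈ C, (X.dist p.1 z : ℝ) ≤ 2 * δ₁ + 1 ∧
      (X.dist p.2 z : ℝ) ≤ 2 * δ₁ + 1 := by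
    rintro ⟨u, v⟩ hp
    rw [hC, Finset.mem_filter] at hp
    obtain ⟨hpT, hu, hv⟩ := hp
    have hu0 : ¬ X.dist x u ≤ k := hu
    have hv0 : X.dist x v ≤ k := hv
    clear hu hv
    have hne : a.val u v ≠ 0 := (hmemT _).1 hpT
    obtain ⟨p1, hp1⟩ := hconn.exists_walk_length_eq_dist x z
    obtain ⟨p2, hp2⟩ := hconn.exists_walk_length_eq_dist z y
    have hγ : (p1.append p2).length = X.dist x y := by
      rw [SimpleGraph.Walk.length_append, hp1, hp2, hz]
    obtain ⟨w, hwsup, hdu, hdv⟩ := hgeo x y (p1.append p2) hγ u v hne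
    rw [SimpleGraph.Walk.mem_support_append_iff] at hwsup
    have hu' : k + 1 ≤ X.dist x u := by omega
    have hv' : X.dist x v ≤ k := hv0
    have t1 : X.dist x u ≤ X.dist x w + X.dist u w := by
      have h := hconn.dist_triangle (u := x) (v := w) (w := u)
      rwa [SimpleGraph.dist_comm (G := X) (u := w) (v := u)] at h
    have t2 : X.dist x w ≤ X.dist x v + X.dist v w := hconn.dist_triangle
    have t3 : X.dist u z ≤ X.dist u w + X.dist w z := hconn.dist_triangle
    have t4 : X.dist v z ≤ X.dist v w + X.dist w z := hconn.dist_triangle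
    have key : (X.dist w z : ℝ) ≤ δ₁ := by
      rcases hwsup with hw1 | hw2
      · have e1 : X.dist x w + X.dist w z = X.dist x z :=
          geodesic_support_dist hconn p1 hp1 hw1
        have r1 : (X.dist x w : ℝ) + X.dist w z = X.dist x z := by exact_mod_cast e1
        have r2 : (X.dist x z : ℝ) ≤ (k : ℝ) + 1 := by exact_mod_cast hk3
        have r3 : (X.dist x u : ℝ) ≤ (X.dist x w : ℝ) + X.dist u w := by exact_mod_cast t1
        have r4 : ((k : ℝ) + 1) ≤ X.dist x u := by exact_mod_cast hu'
        linarith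
      · have e1 : X.dist z w + X.dist w y = X.dist z y :=
          geodesic_support_dist hconn p2 hp2 hw2
        have e2 : X.dist x y ≤ X.dist x w + X.dist w y := hconn.dist_triangle
        have ecomm : X.dist w z = X.dist z w := SimpleGraph.dist_comm (G := X)
        have r1 : (X.dist z w : ℝ) + X.dist w y = X.dist z y := by exact_mod_cast e1
        have r2 : (X.dist x y : ℝ) ≤ (X.dist x w : ℝ) + X.dist w y := by exact_mod_cast e2
        have r3 : (X.dist x z : ℝ) + X.dist z y = X.dist x y := by exact_mod_cast hz
        have r4 : (X.dist x w : ℝ) ≤ (X.dist x v : ℝ) + X.dist v w := by exact_mod_cast t2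
        have r5 : (k : ℝ) ≤ X.dist x z := by exact_mod_cast hk2
        have r6 : (X.dist x v : ℝ) ≤ (k : ℝ) := by exact_mod_cast hv'
        have r7 : (X.dist w z : ℝ) = X.dist z w := by exact_mod_cast ecomm
        linarith
    constructor
    · have r : (X.dist u z : ℝ) ≤ (X.dist u w : ℝ) + X.dist w z := by exact_mod_cast t3
      simp only []
      linarith
    · have r : (X.dist v z : ℝ) ≤ (X.dist v w : ℝ) + X.dist w z := by exact_mod_cast t4
      simp only []
      linarith
  -- assemble
  set f : V × V → ℚ := fun p =>
    if (X.dist p.1 z : ℝ) ≤ 2 * δ₁ + 1 ∧ (X.dist p.2 z : ℝ) ≤ 2 * δ₁ + 1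
    then |a.val p.1 p.2| else 0 with hf
  have hfin : ∑ᶠ p : V × V, f p = ∑ p ∈ T, f p := by
    apply finsum_eq_sum_of_support_subset
    intro p hp
    rw [Function.mem_support] at hp
    by_contra h
    apply hp
    have h0 : a.val p.1 p.2 = 0 := by
      by_contra h2
      exact h ((hmemT p).2 h2)
    rw [hf]
    simp [h0]
  set D : Finset (V × V) := C ∪ C.image Prod.swap with hD
  have hDT : D ⊆ T := by
    intro p hp
    rcases Finset.mem_union.1 hp with h | h
    · exact hCT h
    · obtain ⟨r, hr, hrp⟩ := Finset.mem_image.1 h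
      have hrT : r ∈ T := hCT hr
      have : a.val r.2 r.1 ≠ 0 := by
        rw [a.antisymm r.2 r.1]
        simpa using (hmemT r).1 hrT
      rw [← hrp]
      exact (hmemT (r.2, r.1)).2 this
  have hdisj : Disjoint C (C.image Prod.swap) := by
    rw [Finset.disjoint_left]
    intro p hp hp'
    obtain ⟨r, hr, hrp⟩ := Finset.mem_image.1 hp'
    have h1 := (Finset.mem_filter.1 hp).2.1
    have h2 := (Finset.mem_filter.1 hr).2.2
    apply h1
    rw [← hrp]
    exact h2
  have hfC : ∀ p ∈ D, f p = |a.val p.1 p.2| := by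
    intro p hp
    rw [hf]
    simp only []
    rw [if_pos]
    rcases Finset.mem_union.1 hp with h | h
    · exact hgeoclaim p h
    · obtain ⟨r, hr, hrp⟩ := Finset.mem_image.1 h
      obtain ⟨h1, h2⟩ := hgeoclaim r hr
      rw [← hrp]
      exact ⟨h2, h1⟩
  have hvalswap : ∀ p : V × V, |a.val p.2 p.1| = |a.val p.1 p.2| := fun p => by
    rw [a.antisymm]; exact abs_neg _
  have hsumD : ∑ p ∈ D, f p = 2 * ∑ p ∈ C, |a.val p.1 p.2| := by
    rw [hD, Finset.sum_union hdisj,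
      Finset.sum_congr rfl (fun p hp => hfC p (Finset.mem_union_left _ hp)),
      Finset.sum_congr rfl (fun p hp => hfC p (Finset.mem_union_right _ hp)),
      Finset.sum_image (fun p _ q _ h => Prod.swap_injective h)]
    simp only [Prod.fst_swap, Prod.snd_swap]
    rw [Finset.sum_congr rfl (fun p (_ : p ∈ C) => hvalswap p)]
    ring
  have habs : 1 ≤ ∑ p ∈ C, |a.val p.1 p.2| := by
    have h1 : |∑ p ∈ C, a.val p.1 p.2| ≤ ∑ p ∈ C, |a.val p.1 p.2| :=
      Finset.abs_sum_le_sum_abs _ _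
    rw [hCsum] at h1
    simpa using h1
  have hle : ∑ p ∈ D, f p ≤ ∑ p ∈ T, f p := by
    apply Finset.sum_le_sum_of_subset_of_nonneg hDT
    intro p _ _
    rw [hf]
    simp only []
    split
    · exact abs_nonneg _
    · exact le_rfl
  rw [hfin]
  rw [hsumD] at hle
  linarith
end

section
/- Let X be a connected simple graph with vertex set V and graph distance d, and let q assign to every ordered pair (x,y) of vertices a rational 1-chain q(x,y) on X such that ∂q(x,y) = 𝟙_y − 𝟙_x for all x,y, and such that there is a constant δ₁ ≥ 0 for which, for every geodesic γ from x to y, every unoriented edge {u,v} with q(x,y)(u,v) ≠ 0 lies within distance δ₁ of some vertex of γ. Set ρ = 2δ₁ + 1, and suppose λ ≥ 1 is such that for every vertex w of X, the number of unoriented edges lying within distance ρ of w is at most λ. Then for all x ≠ y in V and every vertex z with d(x,z) + d(z,y) = d(x,y), there exists an unoriented edge {u,v} with d(u,z) ≤ ρ and d(v,z) ≤ ρ such that |q(x,y)(u,v)| ≥ 1/λ. -/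
open scoped Classical

open OneChain

private lemma aux_dist_split {V : Type*} {X : SimpleGraph V} (hconn : X.Connected)
    {a b w : V} (p : X.Walk a b) (hp : p.length = X.dist a b) (hw : w ∈ p.support) :
    X.dist a w + X.dist w b = X.dist a b := by
  have h1 := SimpleGraph.dist_le (p.takeUntil w hw)
  have h2 := SimpleGraph.dist_le (p.dropUntil w hw)
  have h3 : (p.takeUntil w hw).length + (p.dropUntil w hw).length = p.length := by
    rw [← SimpleGraph.Walk.length_append, p.take_spec hw]
  have h4 := hconn.dist_triangle (u := a) (v := w) (w := b)
  omega

/-- If `q` is a quasigeodesic bicombing with constant `δ₁`, every ball of radius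
`ρ = 2δ₁ + 1` contains at most `λ` unoriented edges, and `z` lies on a geodesic
between `x ≠ y`, then some edge within distance `ρ` of `z` has coefficient at
least `1/λ` in `q(x,y)`. -/
theorem exists_edge_with_large_coefficient {V : Type*} (X : SimpleGraph V) (hconn : X.Connected)
    (q : V → V → OneChain X)
    (hbdry : ∀ x y v, (q x y).boundary v =
      (if v = y then (1 : ℚ) else 0) - (if v = x then (1 : ℚ) else 0))
    (δ₁ : ℝ) (hδ₁ : 0 ≤ δ₁)
    (hgeo : ∀ (x y : V) (p : X.Walk x y), p.length = X.dist x y →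
      ∀ u v : V, (q x y).val u v ≠ 0 →
        ∃ w ∈ p.support, (X.dist u w : ℝ) ≤ δ₁ ∧ (X.dist v w : ℝ) ≤ δ₁)
    (lam : ℝ) (hlam : 1 ≤ lam)
    (hcount : ∀ w : V,
      {e : Sym2 V | e ∈ X.edgeSet ∧ ∀ v ∈ e, (X.dist v w : ℝ) ≤ 2 * δ₁ + 1}.Finite ∧
      (({e : Sym2 V | e ∈ X.edgeSet ∧ ∀ v ∈ e, (X.dist v w : ℝ) ≤ 2 * δ₁ + 1}.ncard : ℝ)
        ≤ lam))
    (x y z : V) (hxy : x ≠ y)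
    (hz : X.dist x z + X.dist z y = X.dist x y) :
    ∃ u v : V, X.Adj u v ∧ (X.dist u z : ℝ) ≤ 2 * δ₁ + 1 ∧ (X.dist v z : ℝ) ≤ 2 * δ₁ + 1 ∧
      1 / lam ≤ ((|(q x y).val u v| : ℝ)) := by
    classical
  obtain ⟨hEfin, hEcard⟩ := hcount z
  set Q := q x y with hQdef
  have hd1 : 1 ≤ X.dist x y := hconn.pos_dist_of_ne hxy
  have hdxz : X.dist x z ≤ X.dist x y := by omega
  set k := min (X.dist x z) (X.dist x y - 1) with hk
  have hk1 : k ≤ X.dist x z := by omega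
  have hk2 : X.dist x z ≤ k + 1 := by omega
  have hk3 : k + 1 ≤ X.dist x y := by omega
  obtain ⟨p₁, hp₁⟩ := hconn.exists_walk_length_eq_dist x z
  obtain ⟨p₂, hp₂⟩ := hconn.exists_walk_length_eq_dist z y
  have hplen : (p₁.append p₂).length = X.dist x y := by
    rw [SimpleGraph.Walk.length_append, hp₁, hp₂, hz]
  -- geometry: a crossing edge with nonzero coefficient is within ρ of z
  have geom : ∀ u v : V, Q.val u v ≠ 0 → X.dist x u ≤ k → ¬ X.dist x v ≤ k →
      X.Adj u v ∧ (X.dist u z : ℝ) ≤ 2 * δ₁ + 1 ∧ (X.dist v z : ℝ) ≤ 2 * δ₁ + 1 := by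
    intro u v hne hu hv
    have hadj : X.Adj u v := by
      by_contra h
      exact hne (Q.adj_support u v h)
    have hduv : X.dist u v ≤ 1 := by
      have := SimpleGraph.dist_le (SimpleGraph.Walk.cons hadj SimpleGraph.Walk.nil)
      simpa using this
    have htri1 : X.dist x v ≤ X.dist x u + X.dist u v := hconn.dist_triangle
    have hxu : X.dist x u = k := by
      have htri2 : X.dist x u ≤ X.dist x v + X.dist v u := hconn.dist_triangle
      have : X.dist v u = X.dist u v := SimpleGraph.dist_comm
      omega
    have hxv : X.dist x v = k + 1 := by omega
    obtain ⟨w, hwsup, hwu, hwv⟩ := hgeo x y (p₁.append p₂) hplen u v hne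
    -- show X.dist w z ≤ 1 + X.dist u w  (as naturals)
    have hwz : (X.dist w z : ℝ) ≤ 1 + (X.dist u w : ℝ) := by
      rcases (SimpleGraph.Walk.mem_support_append_iff _ _).mp hwsup with hw1 | hw2
      · have e1 : X.dist x w + X.dist w z = X.dist x z := aux_dist_split hconn p₁ hp₁ hw1
        have htri : X.dist x u ≤ X.dist x w + X.dist w u := hconn.dist_triangle
        have hc : X.dist w u = X.dist u w := SimpleGraph.dist_comm
        have : X.dist w z ≤ 1 + X.dist u w := by omega
        exact_mod_cast this
      · have e2 : X.dist z w + X.dist w y = X.dist z y := aux_dist_split hconn p₂ hp₂ hw2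
        have htri : X.dist x y ≤ X.dist x w + X.dist w y := hconn.dist_triangle
        have htri2 : X.dist x w ≤ X.dist x u + X.dist u w := hconn.dist_triangle
        have hc : X.dist z w = X.dist w z := SimpleGraph.dist_comm
        have : X.dist w z ≤ 1 + X.dist u w := by omega
        exact_mod_cast this
    have htu : X.dist u z ≤ X.dist u w + X.dist w z := hconn.dist_triangle
    have htv : X.dist v z ≤ X.dist v w + X.dist w z := hconn.dist_triangle
    have htu' : (X.dist u z : ℝ) ≤ (X.dist u w : ℝ) + (X.dist w z : ℝ) := by exact_mod_cast htu
    have htv' : (X.dist v z : ℝ) ≤ (X.dist v w : ℝ) + (X.dist w z : ℝ) := by exact_mod_cast htv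
    refine ⟨hadj, by linarith, by linarith⟩
  -- the algebraic identity
  set T : Finset (V × V) := Q.finite_support.toFinset with hT
  set U : Finset V := ((T.image Prod.fst) ∪ (T.image Prod.snd)) ∪ {x, y} with hU
  have hmemU : ∀ u v : V, Q.val u v ≠ 0 → u ∈ U ∧ v ∈ U := by
    intro u v h
    have hT' : (u, v) ∈ T := by
      rw [hT, Set.Finite.mem_toFinset]
      exact h
    constructor
    · exact Finset.mem_union_left _ (Finset.mem_union_left _ (Finset.mem_image_of_mem _ hT'))
    · exact Finset.mem_union_left _ (Finset.mem_union_right _ (Finset.mem_image_of_mem _ hT'))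
  have hxU : x ∈ U := Finset.mem_union_right _ (by simp)
  have hyU : y ∈ U := Finset.mem_union_right _ (by simp)
  set g : V → ℚ := fun v => if X.dist x v ≤ k then 0 else 1 with hg
  have hgx : g x = 0 := by simp [hg, SimpleGraph.dist_self]
  have hgy : g y = 1 := by
    simp only [hg]
    rw [if_neg (by omega)]
  have hbd0 : ∀ v : V, v ≠ x → v ≠ y → Q.boundary v = 0 := by
    intro v h1 h2
    rw [hQdef, hbdry x y v, if_neg h2, if_neg h1, sub_zero]
  have step1 : ∑ᶠ v, Q.boundary v * g v = 1 := by
    rw [finsum_eq_sum_of_support_subset _ (s := ({x, y} : Finset V))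
      (by
        intro v hv
        simp only [Function.mem_support] at hv
        simp only [Finset.coe_insert, Finset.coe_singleton, Set.mem_insert_iff,
          Set.mem_singleton_iff]
        by_contra h
        push_neg at h
        rw [hbd0 v h.1 h.2, zero_mul] at hv
        exact hv rfl)]
    rw [Finset.sum_pair hxy, hgx, hgy, mul_zero, mul_one, zero_add]
    rw [hQdef, hbdry x y y, if_pos rfl, if_neg hxy.symm, sub_zero]
  have hbdU : ∀ v : V, Q.boundary v = ∑ u ∈ U, Q.val u v := by
    intro v
    rw [OneChain.boundary]
    exact finsum_eq_sum_of_support_subset _ (by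
      intro u hu
      simp only [Function.mem_support] at hu
      exact (hmemU u v hu).1)
  have step2 : ∑ᶠ v, Q.boundary v * g v = ∑ v ∈ U, (∑ u ∈ U, Q.val u v) * g v := by
    rw [finsum_eq_sum_of_support_subset _ (s := U)
      (by
        intro v hv
        simp only [Function.mem_support] at hv
        by_contra h
        have h1 : v ≠ x := fun e => h (e ▸ hxU)
        have h2 : v ≠ y := fun e => h (e ▸ hyU)
        rw [hbd0 v h1 h2, zero_mul] at hv
        exact hv rfl)]
    exact Finset.sum_congr rfl fun v _ => by rw [hbdU v]
  have key : ∑ v ∈ U, ∑ u ∈ U, Q.val u v * g v = 1 := by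
    rw [← step1, step2]
    exact Finset.sum_congr rfl fun v _ => (Finset.sum_mul _ _ _).symm
  have anti : ∑ v ∈ U, ∑ u ∈ U, Q.val u v * g v * g u = 0 := by
    have hswap : ∑ v ∈ U, ∑ u ∈ U, Q.val u v * g v * g u
        = ∑ u ∈ U, ∑ v ∈ U, Q.val u v * g v * g u := Finset.sum_comm
    have hneg : ∑ u ∈ U, ∑ v ∈ U, Q.val u v * g v * g u
        = - ∑ u ∈ U, ∑ v ∈ U, Q.val v u * g u * g v := by
      rw [← Finset.sum_neg_distrib]
      refine Finset.sum_congr rfl fun a _ => ?_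
      rw [← Finset.sum_neg_distrib]
      refine Finset.sum_congr rfl fun b _ => ?_
      rw [Q.antisymm b a]
      ring
    have := hswap.trans hneg
    linarith [this]
  have key2 : ∑ u ∈ U, ∑ v ∈ U, Q.val u v * g v * (1 - g u) = 1 := by
    have expand : ∀ v ∈ U, ∑ u ∈ U, Q.val u v * g v
        = ∑ u ∈ U, (Q.val u v * g v * g u + Q.val u v * g v * (1 - g u)) := by
      intro v _
      exact Finset.sum_congr rfl fun u _ => by ring
    rw [Finset.sum_congr rfl expand] at key
    simp only [Finset.sum_add_distrib] at key
    rw [anti, zero_add] at key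
    rw [Finset.sum_comm]
    exact key
  set F : Finset (V × V) := (U ×ˢ U).filter
    (fun p => Q.val p.1 p.2 ≠ 0 ∧ X.dist x p.1 ≤ k ∧ ¬ X.dist x p.2 ≤ k) with hF
  have hFsum : ∑ p ∈ F, Q.val p.1 p.2 = 1 := by
    have h1 : ∑ p ∈ U ×ˢ U, Q.val p.1 p.2 * g p.2 * (1 - g p.1) = 1 := by
      rw [Finset.sum_product]
      exact key2
    rw [← Finset.sum_filter_of_ne (p := fun p : V × V =>
        Q.val p.1 p.2 ≠ 0 ∧ X.dist x p.1 ≤ k ∧ ¬ X.dist x p.2 ≤ k)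
      (by
        intro p _ hp
        refine ⟨fun h0 => hp (by rw [h0]; ring), ?_, ?_⟩
        · by_contra h
          have : g p.1 = 1 := by simp [hg, h]
          rw [this] at hp
          simp at hp
        · intro h
          have : g p.2 = 0 := by simp [hg, h]
          rw [this] at hp
          simp at hp)] at h1
    rw [← h1, ← hF]
    refine Finset.sum_congr rfl fun p hp => ?_
    rw [hF, Finset.mem_filter] at hp
    obtain ⟨-, -, h2, h3⟩ := hp
    have e2 : g p.2 = 1 := by simp [hg, h3]
    have e1 : g p.1 = 0 := by simp [hg, h2]
    rw [e1, e2]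
    ring
  have habs : (1 : ℝ) ≤ ∑ p ∈ F, (|Q.val p.1 p.2| : ℝ) := by
    have h1 : (1 : ℚ) ≤ ∑ p ∈ F, |Q.val p.1 p.2| := by
      rw [← hFsum]
      exact Finset.sum_le_sum fun p _ => le_abs_self _
    calc (1 : ℝ) = ((1 : ℚ) : ℝ) := by norm_num
    _ ≤ ((∑ p ∈ F, |Q.val p.1 p.2| : ℚ) : ℝ) := by exact_mod_cast h1
    _ = ∑ p ∈ F, (|Q.val p.1 p.2| : ℝ) := by push_cast; rfl
  have hFgeom : ∀ p ∈ F, X.Adj p.1 p.2 ∧ (X.dist p.1 z : ℝ) ≤ 2 * δ₁ + 1 ∧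
      (X.dist p.2 z : ℝ) ≤ 2 * δ₁ + 1 := by
    intro p hp
    rw [hF, Finset.mem_filter] at hp
    exact geom p.1 p.2 hp.2.1 hp.2.2.1 hp.2.2.2
  have hlam0 : (0 : ℝ) < lam := lt_of_lt_of_le one_pos hlam
  have hcard : (F.card : ℝ) ≤ lam := by
    have hmaps : ∀ p ∈ F, Sym2.mk p.1 p.2 ∈ hEfin.toFinset := by
      intro p hp
      obtain ⟨hadj, h1, h2⟩ := hFgeom p hp
      rw [Set.Finite.mem_toFinset]
      refine ⟨?_, ?_⟩
      · exact hadj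
      · intro v hv
        rcases Sym2.mem_iff.mp (by exact_mod_cast hv) with h | h
        · rw [h]; exact h1
        · rw [h]; exact h2
    have hinj : Set.InjOn (fun p : V × V => Sym2.mk p.1 p.2) F := by
      intro p hp p' hp' he
      rw [hF, Finset.mem_coe, Finset.mem_filter] at hp hp'
      rcases Sym2.mk_eq_mk_iff.mp he with h | h
      · exact h
      · exfalso
        have h1 : p.1 = p'.2 := by rw [h]; rfl
        have h2 : p.2 = p'.1 := by rw [h]; rfl
        exact hp'.2.2.2 (h1 ▸ hp.2.2.1)
    have h1 : F.card ≤ hEfin.toFinset.card :=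
      Finset.card_le_card_of_injOn _ hmaps hinj
    have h2 : hEfin.toFinset.card
        = {e : Sym2 V | e ∈ X.edgeSet ∧ ∀ v ∈ e, (X.dist v z : ℝ) ≤ 2 * δ₁ + 1}.ncard :=
      (Set.ncard_eq_toFinset_card _ hEfin).symm
    calc (F.card : ℝ) ≤ (hEfin.toFinset.card : ℝ) := by exact_mod_cast h1
    _ = _ := by rw [h2]
    _ ≤ lam := hEcard
  by_contra hcon
  push_neg at hcon
  have hFlt : ∀ p ∈ F, (|Q.val p.1 p.2| : ℝ) < 1 / lam := by
    intro p hp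
    obtain ⟨hadj, h1, h2⟩ := hFgeom p hp
    exact hcon p.1 p.2 hadj h1 h2
  have hFne : F.Nonempty := by
    by_contra h
    rw [Finset.not_nonempty_iff_eq_empty] at h
    rw [h, Finset.sum_empty] at hFsum
    exact one_ne_zero hFsum.symm
  have hsum_lt : ∑ p ∈ F, (|Q.val p.1 p.2| : ℝ) < ∑ _p ∈ F, 1 / lam :=
    Finset.sum_lt_sum_of_nonempty hFne hFlt
  rw [Finset.sum_const, nsmul_eq_mul] at hsum_lt
  have hfinal : (F.card : ℝ) * (1 / lam) ≤ 1 := by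
    rw [mul_one_div, div_le_one hlam0]
    exact hcard
  linarith
end
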